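/- Let n ≥ 2 and d ≥ 1 be integers and let a be a natural number. If 2a = (n+1)(d−1) and d^n = C(a+n, n) (the ordinary binomial coefficient), then d = 1 and a = 0. -/
import Mathlib

open Finset

lemma ascFactorial_prod (a n : ℕ) :
    (a + 1).ascFactorial n = ∏ i ∈ Finset.range n, (a + 1 + i) := by
  induction n with
  | zero => simp
  | succ m ih => rw [Nat.ascFactorial_succ, Finset.prod_range_succ, ih, mul_comm]

lemma factor_ineq (n d a i : ℕ) (hn : 2 ≤ n) (hd : 2 ≤ d) (hi : i < n)
    (h1 : 2 * a = (n + 1) * (d - 1)) :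
    d ^ 2 * ((i + 1) * (n - i)) ≤ (a + 1 + i) * (a + (n - i)) := by
  have hb : ∃ b, d = b + 1 ∧ 1 ≤ b := ⟨d - 1, by omega, by omega⟩
  obtain ⟨b, rfl, hb1⟩ := hb
  have h1' : 2 * a = (n + 1) * b := by simpa using h1
  have hin : i ≤ n := hi.le
  zify [hin]
  have h1z : 2 * (a : ℤ) = ((n : ℤ) + 1) * b := by exact_mod_cast h1'
  nlinarith [sq_nonneg ((n : ℤ) - 1 - 2 * i), mul_nonneg (mul_nonneg (show (0:ℤ) ≤ b by positivity) (show (0:ℤ) ≤ b + 2 by positivity)) (sq_nonneg ((n : ℤ) - 1 - 2 * i)), h1z, mul_self_nonneg (2*(a:ℤ) - ((n:ℤ)+1)*b)]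

lemma factor_ineq_strict (n d a : ℕ) (hn : 2 ≤ n) (hd : 2 ≤ d)
    (h1 : 2 * a = (n + 1) * (d - 1)) :
    d ^ 2 * ((0 + 1) * (n - 0)) < (a + 1 + 0) * (a + (n - 0)) := by
  have hb : ∃ b, d = b + 1 ∧ 1 ≤ b := ⟨d - 1, by omega, by omega⟩
  obtain ⟨b, rfl, hb1⟩ := hb
  have h1' : 2 * a = (n + 1) * b := by simpa using h1
  simp only [Nat.sub_zero, Nat.add_zero, Nat.zero_add, one_mul]
  zify
  have h1z : 2 * (a : ℤ) = ((n : ℤ) + 1) * b := by exact_mod_cast h1'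
  have hbz : (1 : ℤ) ≤ b := by exact_mod_cast hb1
  have hnz : (2 : ℤ) ≤ n := by exact_mod_cast hn
  nlinarith [mul_nonneg (mul_nonneg (show (0:ℤ) ≤ b by linarith) (show (0:ℤ) ≤ b + 2 by linarith)) (sq_nonneg ((n : ℤ) - 1)), h1z, sq_nonneg ((n:ℤ) - 1), mul_pos (show (0:ℤ) < b*(b+2) by nlinarith) (show (0:ℤ) < ((n:ℤ)-1)^2 by nlinarith)]

/-- Arithmetic core of the classification of rank 1 Ulrich bundles on `(ℙⁿ, O(d))`:
if `n ≥ 2`, `d ≥ 1`, `2a = (n+1)(d-1)` and `d^n = C(a+n, n)`, then `d = 1` and `a = 0`. -/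
theorem stmt_0 (n d a : ℕ) (hn : 2 ≤ n) (hd : 1 ≤ d)
    (h1 : 2 * a = (n + 1) * (d - 1)) (h2 : d ^ n = Nat.choose (a + n) n) :
    d = 1 ∧ a = 0 := by
  rcases Nat.lt_or_ge d 2 with hd2 | hd2
  · have hd1 : d = 1 := by omega
    subst hd1
    simp at h1
    exact ⟨rfl, by omega⟩
  exfalso
  -- key product identity
  have key : (∏ i ∈ Finset.range n, (a + 1 + i)) = n.factorial * d ^ n := by
    rw [← ascFactorial_prod, Nat.ascFactorial_eq_factorial_mul_choose, h2]
  -- squaring with reflection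
  have refl1 : (∏ i ∈ Finset.range n, (a + 1 + i)) = ∏ i ∈ Finset.range n, (a + (n - i)) := by
    rw [← Finset.prod_range_reflect]
    apply Finset.prod_congr rfl
    intro i hi
    rw [Finset.mem_range] at hi
    omega
  have refl2 : (∏ i ∈ Finset.range n, (i + 1)) = ∏ i ∈ Finset.range n, (n - i) := by
    rw [← Finset.prod_range_reflect]
    apply Finset.prod_congr rfl
    intro i hi
    rw [Finset.mem_range] at hi
    omega
  have hfac : (∏ i ∈ Finset.range n, (i + 1)) = n.factorial :=
    Finset.prod_range_add_one_eq_factorial n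
  have strict : (∏ i ∈ Finset.range n, d ^ 2 * ((i + 1) * (n - i)))
      < ∏ i ∈ Finset.range n, ((a + 1 + i) * (a + (n - i))) := by
    apply Finset.prod_lt_prod
    · intro i hi
      rw [Finset.mem_range] at hi
      have : 0 < n - i := by omega
      positivity
    · intro i hi
      rw [Finset.mem_range] at hi
      exact factor_ineq n d a i hn hd2 hi h1
    · exact ⟨0, Finset.mem_range.mpr (by omega), factor_ineq_strict n d a hn hd2 h1⟩
  rw [Finset.prod_mul_distrib] at strict
  have lhs_eq : (∏ i ∈ Finset.range n, d ^ 2) * ∏ i ∈ Finset.range n, ((i + 1) * (n - i))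
      = (n.factorial * d ^ n) * (n.factorial * d ^ n) := by
    rw [Finset.prod_const, Finset.card_range, Finset.prod_mul_distrib, ← refl2, hfac]
    ring
  have rhs_eq : (∏ i ∈ Finset.range n, ((a + 1 + i) * (a + (n - i))))
      = (n.factorial * d ^ n) * (n.factorial * d ^ n) := by
    rw [Finset.prod_mul_distrib, ← refl1, key]
  rw [rhs_eq, lhs_eq] at strict
  exact lt_irrefl _ strict
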